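/- arXiv:1708.08320 — 2 statements merged into one kernel-verified Lean document; each statement's English description precedes it below -/
import Mathlib

section
/- For the triangular pulse g with ∫_0^T g² = 1 and any nonzero real θ, the quantity ∫_0^T g(t)² exp(i·θ·P·g(t)²) dt tends to 0 as P → ∞, while for θ = 0 it equals 1 for all P. -/
open MeasureTheory intervalIntegral Filter

theorem stmt6 (T : ℝ) (hT : 0 < T) (g : ℝ → ℝ)
    (hg : ∀ t, g t = Real.sqrt (12 / T ^ 3) * (T / 2 - |T / 2 - t|))
    (hE : ∫ t in (0:ℝ)..T, (g t) ^ 2 = 1) :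
    (∀ θ : ℝ, θ ≠ 0 →
      Tendsto (fun P : ℝ =>
          ∫ t in (0:ℝ)..T, ((g t : ℝ) : ℂ) ^ 2 *
            Complex.exp (Complex.I * (θ : ℂ) * (P : ℂ) * ((g t) ^ 2 : ℝ)))
        atTop (nhds 0)) ∧
    (∀ P : ℝ,
      ∫ t in (0:ℝ)..T, ((g t : ℝ) : ℂ) ^ 2 *
          Complex.exp (Complex.I * ((0:ℝ) : ℂ) * (P : ℂ) * ((g t) ^ 2 : ℝ)) = 1) := by
  have hgc : Continuous g := by
    have : g = fun t => Real.sqrt (12 / T ^ 3) * (T / 2 - |T / 2 - t|) := funext hg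
    rw [this]; fun_prop
  set c : ℝ := 12 / T ^ 3 with hc
  have hcpos : 0 < c := by positivity
  constructor
  · intro θ hθ
    set U : ℝ := (T / 2) ^ 2 with hU
    have hUpos : 0 < U := by positivity
    set ψ : ℝ → ℂ := Set.indicator (Set.Ioc 0 U)
      (fun u => ((c / 2 * Real.sqrt u : ℝ) : ℂ)) with hψ
    set w : ℝ → ℝ := fun P => -(θ * c * P) / (2 * Real.pi) with hw
    have key : ∀ P : ℝ,
        (∫ t in (0:ℝ)..T, ((g t : ℝ) : ℂ) ^ 2 *
          Complex.exp (Complex.I * (θ : ℂ) * (P : ℂ) * ((g t) ^ 2 : ℝ)))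
        = 2 * ∫ v : ℝ, Real.fourierChar (-(v * w P)) • ψ v := by
      intro P
      set h : ℝ → ℂ := fun t => ((g t : ℝ) : ℂ) ^ 2 *
        Complex.exp (Complex.I * (θ : ℂ) * (P : ℂ) * ((g t) ^ 2 : ℝ)) with hh
      have hhc : Continuous h := by fun_prop
      set G : ℝ → ℂ := fun u => ((c / 2 * Real.sqrt u : ℝ) : ℂ) *
        Complex.exp (Complex.I * (θ : ℂ) * (P : ℂ) * ((c * u : ℝ) : ℂ)) with hG
      have hGc : Continuous G := by fun_prop
      -- symmetry
      have hsym : ∀ t, h (T - t) = h t := by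
        intro t
        have : g (T - t) = g t := by
          rw [hg, hg, show T / 2 - (T - t) = -(T / 2 - t) by ring, abs_neg]
        simp [hh, this]
      have E1 : (∫ t in (0:ℝ)..T, h t)
          = (∫ t in (0:ℝ)..(T/2), h t) + ∫ t in (T/2)..T, h t :=
        (integral_add_adjacent_intervals (hhc.intervalIntegrable _ _)
          (hhc.intervalIntegrable _ _)).symm
      have E2 : (∫ t in (T/2)..T, h t) = ∫ t in (0:ℝ)..(T/2), h t := by
        have h1 := intervalIntegral.integral_comp_sub_left (a := (0:ℝ)) (b := T/2) h T
        simp only [hsym] at h1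
        have h2 : (∫ t in (T/2)..T, h t) = ∫ x in T - (T/2)..T - 0, h x := by
          congr 1 <;> ring
        rw [h2, ← h1]
      -- on [0, T/2]
      have hgt : ∀ t ∈ Set.uIcc (0:ℝ) (T/2), (g t) ^ 2 = c * t ^ 2 := by
        intro t ht
        rw [Set.uIcc_of_le (by linarith)] at ht
        rw [hg, abs_of_nonneg (by linarith [ht.2] : (0:ℝ) ≤ T / 2 - t)]
        rw [mul_pow, Real.sq_sqrt hcpos.le]
        ring
      have E3 : (∫ t in (0:ℝ)..(T/2), h t)
          = ∫ t in (0:ℝ)..(T/2), (2 * t) • ((G ∘ fun x => x ^ 2) t) := by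
        apply intervalIntegral.integral_congr
        intro t ht
        have h0t : 0 ≤ t := by
          rw [Set.uIcc_of_le (by linarith)] at ht; exact ht.1
        have hgt' := hgt t ht
        have hcast : ((g t : ℝ) : ℂ) ^ 2 = ((c * t ^ 2 : ℝ) : ℂ) := by
          rw [← Complex.ofReal_pow, hgt']
        simp only [hh, Function.comp_apply, hG, Real.sqrt_sq h0t, hgt', hcast,
          Complex.real_smul]
        push_cast
        ring
      have E4 : (∫ t in (0:ℝ)..(T/2), (2 * t) • ((G ∘ fun x => x ^ 2) t))
          = ∫ u in (0:ℝ)..U, G u := by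
        have := intervalIntegral.integral_comp_smul_deriv
          (f := fun x : ℝ => x ^ 2) (f' := fun x : ℝ => 2 * x) (g := G)
          (a := 0) (b := T/2)
          (fun x _ => by simpa using hasDerivAt_pow 2 x)
          (by fun_prop) hGc
        simpa using this
      have E5 : (∫ u in (0:ℝ)..U, G u)
          = ∫ v : ℝ, Real.fourierChar (-(v * w P)) • ψ v := by
        rw [intervalIntegral.integral_of_le hUpos.le,
          ← MeasureTheory.integral_indicator measurableSet_Ioc]
        congr 1
        funext u
        by_cases hu : u ∈ Set.Ioc (0:ℝ) U
        · have hr : 2 * Real.pi * (-(u * w P)) = θ * P * (c * u) := by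
            rw [hw]
            field_simp
          have hexp : ((2 * Real.pi * (-(u * w P)) : ℝ) : ℂ) * Complex.I
              = Complex.I * (θ : ℂ) * (P : ℂ) * ((c * u : ℝ) : ℂ) := by
            rw [hr]; push_cast; ring
          rw [Set.indicator_of_mem hu, hψ, Set.indicator_of_mem hu, Circle.smul_def,
            Real.fourierChar_apply, hexp, hG]
          rw [smul_eq_mul]
          ring
        · rw [Set.indicator_of_notMem hu, hψ, Set.indicator_of_notMem hu, smul_zero]
      rw [hh] at E1 E2 E3 ⊢
      rw [E1, E2, E3, E4, E5]
      ring
    have hweq : (fun P : ℝ =>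
        ∫ t in (0:ℝ)..T, ((g t : ℝ) : ℂ) ^ 2 *
          Complex.exp (Complex.I * (θ : ℂ) * (P : ℂ) * ((g t) ^ 2 : ℝ)))
        = fun P => 2 * ∫ v : ℝ, Real.fourierChar (-(v * w P)) • ψ v := funext key
    rw [hweq]
    have hwt : Tendsto w atTop (cocompact ℝ) := by
      rw [cocompact_eq_atBot_atTop]
      have hk : w = fun P => (-(θ * c) / (2 * Real.pi)) * P := by
        funext P; rw [hw]; ring
      rcases lt_or_gt_of_ne hθ with hneg | hpos
      · have hkpos : 0 < -(θ * c) / (2 * Real.pi) := by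
          apply div_pos (by nlinarith) (by positivity)
        rw [hk]
        exact (Tendsto.const_mul_atTop hkpos tendsto_id).mono_right le_sup_right
      · have hkneg : -(θ * c) / (2 * Real.pi) < 0 := by
          apply div_neg_of_neg_of_pos (by nlinarith) (by positivity)
        rw [hk]
        exact (Tendsto.const_mul_atTop_of_neg hkneg tendsto_id).mono_right le_sup_left
    have hRL := (Real.tendsto_integral_exp_smul_cocompact ψ).comp hwt
    have := hRL.const_mul (2 : ℂ)
    simpa using this
  · intro P
    have : ∀ t : ℝ, ((g t : ℝ) : ℂ) ^ 2 *
        Complex.exp (Complex.I * ((0:ℝ) : ℂ) * (P : ℂ) * ((g t) ^ 2 : ℝ))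
        = (((g t) ^ 2 : ℝ) : ℂ) := by
      intro t
      simp
    simp_rw [this]
    rw [intervalIntegral.integral_ofReal, hE]
    norm_num
end

section
/- Under triangular pulse shaping, the noiseless MFS demodulator output for input x₁ = √P·x₁' with interference phase parameter s = P·s' (s' ≠ 0 fixed) tends to 0 as P → ∞: namely √P·x₁'·2c²·∫_0^{T/2} t² exp(i·η·c²·P·s'·t²) dt → 0. -/
open MeasureTheory intervalIntegral Filter

lemma key19 (b lam : ℝ) (hb : 0 ≤ b) (hlam : 0 < lam) :
    ‖∫ t in (0:ℝ)..b, (t:ℂ)^2 * Complex.exp (Complex.I * lam * t^2)‖ ≤ b / lam := by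
  set v : ℝ → ℂ := fun t => Complex.exp (Complex.I * lam * t ^ 2) with hv_def
  have hI : (Complex.I : ℂ) ≠ 0 := Complex.I_ne_zero
  have hl : (lam : ℂ) ≠ 0 := by exact_mod_cast hlam.ne'
  have hv : ∀ t : ℝ, HasDerivAt v (Complex.I * lam * (2 * t) * v t) t := by
    intro t
    have h1 : HasDerivAt (fun t : ℝ => ((t : ℂ)) ^ 2) (2 * t) t := by
      have h0 : HasDerivAt (fun t : ℝ => (t : ℂ)) 1 t := (hasDerivAt_id t).ofReal_comp
      simpa [pow_two, two_mul] using h0.fun_mul h0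
    have h2 : HasDerivAt (fun t : ℝ => Complex.I * lam * (t : ℂ) ^ 2)
        (Complex.I * lam * (2 * t)) t := h1.const_mul _
    simpa [hv_def, mul_comm] using h2.cexp
  have hu : ∀ t : ℝ, HasDerivAt (fun t : ℝ => (t : ℂ) / (2 * Complex.I * lam))
      (1 / (2 * Complex.I * lam)) t := by
    intro t
    have h0 : HasDerivAt (fun t : ℝ => (t : ℂ)) 1 t := by
      exact (hasDerivAt_id t).ofReal_comp
    simpa using h0.div_const (2 * Complex.I * lam)
  have hnormv : ∀ t : ℝ, ‖v t‖ = 1 := by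
    intro t
    have hre : (Complex.I * (lam:ℂ) * (t:ℂ)^2).re = 0 := by
      have he : Complex.I * (lam:ℂ) * (t:ℂ)^2 = ((lam * t^2 : ℝ) : ℂ) * Complex.I := by
        push_cast; ring
      rw [he, Complex.mul_re]
      simp [pow_two, Complex.mul_im, Complex.mul_re]
    show ‖Complex.exp (Complex.I * lam * t^2)‖ = 1
    rw [Complex.norm_exp, hre, Real.exp_zero]
  have hcongr : (fun t : ℝ => (t:ℂ)^2 * Complex.exp (Complex.I * lam * t^2))
      = fun t : ℝ => ((t : ℂ) / (2 * Complex.I * lam)) * (Complex.I * lam * (2 * t) * v t) := by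
    funext t
    field_simp [hv_def]
    simp only [hv_def]
    ring_nf
  have hcont : Continuous v := by
    fun_prop
  have hibp : (∫ t in (0:ℝ)..b, (t:ℂ)^2 * Complex.exp (Complex.I * lam * t^2))
      = ((b : ℂ) / (2 * Complex.I * lam)) * v b - ((0:ℂ) / (2 * Complex.I * lam)) * v 0
        - ∫ t in (0:ℝ)..b, (1 / (2 * Complex.I * lam)) * v t := by
    rw [hcongr]
    exact intervalIntegral.integral_mul_deriv_eq_deriv_mul
      (fun x _ => hu x) (fun x _ => hv x)
      (continuous_const.intervalIntegrable _ _)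
      ((by fun_prop : Continuous fun t : ℝ => Complex.I * lam * (2*t) * v t).intervalIntegrable _ _)
  rw [hibp]
  have hnorm2 : ‖(2 * Complex.I * (lam:ℂ))‖ = 2 * lam := by
    simp [abs_of_pos hlam]
  have h1 : ‖((b : ℂ) / (2 * Complex.I * lam)) * v b‖ = b / (2 * lam) := by
    rw [norm_mul, hnormv, norm_div, hnorm2]
    simp [abs_of_nonneg hb]
  have h2 : ‖∫ t in (0:ℝ)..b, (1 / (2 * Complex.I * lam)) * v t‖ ≤ 1 / (2 * lam) * b := by
    have := intervalIntegral.norm_integral_le_of_norm_le_const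
      (C := 1 / (2 * lam)) (a := (0:ℝ)) (b := b)
      (f := fun t => (1 / (2 * Complex.I * lam)) * v t) ?_
    · calc _ ≤ 1 / (2*lam) * |b - 0| := this
        _ = 1 / (2*lam) * b := by rw [sub_zero, abs_of_nonneg hb]
    · intro x _
      rw [norm_mul, hnormv, norm_div, hnorm2]
      simp
  calc ‖_ - _ - _‖ ≤ ‖((b : ℂ) / (2 * Complex.I * lam)) * v b - ((0:ℂ) / (2 * Complex.I * lam)) * v 0‖
        + ‖∫ t in (0:ℝ)..b, (1 / (2 * Complex.I * lam)) * v t‖ := norm_sub_le _ _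
    _ ≤ b / (2 * lam) + 1 / (2 * lam) * b := by
        rw [zero_div, zero_mul, sub_zero, h1]
        exact add_le_add_right h2 _
    _ = b / lam := by field_simp; ring

theorem stmt19 (T η s' : ℝ) (hT : 0 < T) (hη : 0 < η) (hs : 0 < s') (x₁' : ℂ) :
    Tendsto (fun P : ℝ =>
        (Real.sqrt P : ℂ) * x₁' * (2 * ((Real.sqrt (12 / T ^ 3) : ℝ) : ℂ) ^ 2) *
          ∫ t in (0:ℝ)..(T / 2), (t : ℂ) ^ 2 *
            Complex.exp (Complex.I * (η : ℂ) * ((Real.sqrt (12 / T ^ 3) : ℝ) : ℂ) ^ 2 *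
              (P : ℂ) * (s' : ℂ) * (t : ℂ) ^ 2))
      atTop (nhds 0) := by
  set c2 : ℝ := 12 / T ^ 3 with hc2_def
  have hc2 : 0 < c2 := by positivity
  have hsq : ((Real.sqrt c2 : ℝ) : ℂ) ^ 2 = (c2 : ℂ) := by
    rw [← Complex.ofReal_pow, Real.sq_sqrt hc2.le]
  set K : ℝ := ‖x₁'‖ * (2 * c2) * ((T / 2) / (η * c2 * s')) with hK_def
  rw [tendsto_zero_iff_norm_tendsto_zero]
  have hsqrtTop : Tendsto Real.sqrt atTop atTop := by
    apply tendsto_atTop_atTop.2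
    intro b
    refine ⟨(max b 0) ^ 2, fun a ha => ?_⟩
    have h := Real.sqrt_le_sqrt ha
    rw [Real.sqrt_sq (le_max_right b 0)] at h
    exact (le_max_left b 0).trans h
  have hg : Tendsto (fun P : ℝ => K / Real.sqrt P) atTop (nhds 0) :=
    Tendsto.div_atTop tendsto_const_nhds hsqrtTop
  refine squeeze_zero' (Filter.Eventually.of_forall fun P => norm_nonneg _) ?_ hg
  filter_upwards [eventually_ge_atTop (1 : ℝ)] with P hP
  have hP0 : 0 < P := lt_of_lt_of_le one_pos hP
  set lam : ℝ := η * c2 * P * s' with hlam_def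
  have hlam : 0 < lam := by positivity
  have hint : (fun t : ℝ => (t : ℂ) ^ 2 *
        Complex.exp (Complex.I * (η : ℂ) * ((Real.sqrt c2 : ℝ) : ℂ) ^ 2 *
          (P : ℂ) * (s' : ℂ) * (t : ℂ) ^ 2))
      = fun t : ℝ => (t:ℂ)^2 * Complex.exp (Complex.I * lam * t^2) := by
    funext t
    rw [hsq]
    push_cast [hlam_def]
    ring_nf
  rw [hint]
  have hb : (0:ℝ) ≤ T / 2 := by positivity
  have hkey := key19 (T / 2) lam hb hlam
  rw [norm_mul, norm_mul, norm_mul]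
  have hnsqP : ‖((Real.sqrt P : ℝ) : ℂ)‖ = Real.sqrt P := by
    simp [Real.sqrt_nonneg]
  rw [hnsqP, hsq]
  have hn2 : ‖(2 * (c2:ℂ))‖ = 2 * c2 := by
    rw [norm_mul]
    simp [abs_of_pos hc2]
  calc Real.sqrt P * ‖x₁'‖ * ‖(2 * (c2:ℂ))‖ * ‖_‖
      ≤ Real.sqrt P * ‖x₁'‖ * (2 * c2) * ((T/2) / lam) := by
        rw [hn2]
        exact mul_le_mul_of_nonneg_left hkey (by positivity)
    _ = K / Real.sqrt P := by
        have hs2 : Real.sqrt P * Real.sqrt P = P := Real.mul_self_sqrt hP0.le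
        have hsP : Real.sqrt P ≠ 0 := by positivity
        rw [hK_def, hlam_def]
        field_simp
        linear_combination ‖x₁'‖ * hs2
end
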